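/- Let α > 0, μ > 0, r̂ > 0 and let k ≥ 0 be a real number. The k-th moment of the α-μ distribution satisfies ∫₀^∞ r^k · (α μ^μ r^{αμ−1} / (r̂^{αμ} Γ(μ))) · exp(−μ r^α / r̂^α) dr = r̂^k · Γ(μ + k/α) / (μ^{k/α} · Γ(μ)). -/

import Mathlib

open Real MeasureTheory

/-- The `k`-th moment of the α-μ distribution (eq. (20) of the paper).
`rHat` is the scale parameter `r̂`. -/
theorem alpha_mu_moment
    (α μ rHat : ℝ) (hα : 0 < α) (hμ : 0 < μ) (hr : 0 < rHat)
    (k : ℝ) (hk : 0 ≤ k) :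
    (∫ r in Set.Ioi (0 : ℝ),
        r ^ k * (α * μ ^ μ * r ^ (α * μ - 1) / (rHat ^ (α * μ) * Real.Gamma μ)) *
          Real.exp (-(μ * r ^ α / rHat ^ α))) =
      rHat ^ k * Real.Gamma (μ + k / α) / (μ ^ (k / α) * Real.Gamma μ) := by
  have hb : (0:ℝ) < μ / rHat ^ α := by positivity
  have hq : (-1:ℝ) < k + (α * μ - 1) := by nlinarith [mul_pos hα hμ]
  have h1 : ∀ r ∈ Set.Ioi (0:ℝ),
      r ^ k * (α * μ ^ μ * r ^ (α * μ - 1) / (rHat ^ (α * μ) * Real.Gamma μ)) *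
          Real.exp (-(μ * r ^ α / rHat ^ α)) =
      (α * μ ^ μ / (rHat ^ (α * μ) * Real.Gamma μ)) *
        (r ^ (k + (α * μ - 1)) * Real.exp (-(μ / rHat ^ α) * r ^ α)) := by
    intro r hr
    rw [show -(μ * r ^ α / rHat ^ α) = -(μ / rHat ^ α) * r ^ α by ring,
      Real.rpow_add hr]
    ring
  rw [setIntegral_congr_fun measurableSet_Ioi h1, integral_const_mul,
    integral_rpow_mul_exp_neg_mul_rpow hα hq hb]
  have he : -(k + (α * μ - 1) + 1) / α = -(μ + k / α) := by
    field_simp; ring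
  rw [he]
  have h2 : (μ / rHat ^ α) ^ (-(μ + k / α)) =
      (rHat ^ (α * μ) * rHat ^ k) / (μ ^ μ * μ ^ (k / α)) := by
    rw [Real.rpow_neg hb.le, Real.div_rpow hμ.le (by positivity), inv_div,
      ← Real.rpow_mul hr.le, show α * (μ + k / α) = α * μ + k by field_simp,
      Real.rpow_add hr, Real.rpow_add hμ]
  rw [h2]
  have hG : Real.Gamma μ ≠ 0 := (Real.Gamma_pos_of_pos hμ).ne'
  have h3 : rHat ^ (α * μ) ≠ 0 := by positivity
  have h4 : (μ:ℝ) ^ μ ≠ 0 := by positivity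
  have h5 : (μ:ℝ) ^ (k / α) ≠ 0 := by positivity
  field_simp
  ring
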